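/- arXiv:1710.10849 — 2 statements merged into one kernel-verified Lean document; each statement's English description precedes it below -/
import Mathlib

section
/- Let s = (s_1,…,s_r) ∈ N^r and for 1 ≤ ℓ ≤ r set d_ℓ := s_ℓ + ··· + s_r, d := d_1 + ··· + d_r. Let u_1,…,u_{r-1} ∈ C_∞ with |u_ℓ|_∞ ≤ q^{s_ℓ q/(q-1)}, and let P_i ∈ Mat_d(C_∞) be the coefficients of the logarithm log_G = Σ_{i≥0} P_i τ^i of the t-module G = G_{s,u} with ρ_t = θI_d + N + Eτ as in the paper. Then for all i ≥ 0, 1 ≤ ℓ ≤ r, 1 ≤ j ≤ d_ℓ: |P_i N^{d_ℓ − j} E_ℓ|_∞ ≤ q^{(d_ℓ − j) q^i − (d_ℓ q^i − d_1)·q/(q-1)}. -/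
namespace LogCoeffAux

variable {F : Type*} [NormedField F]

lemma nonarch_sum {α : Type*} (hna : ∀ x y : F, ‖x + y‖ ≤ max ‖x‖ ‖y‖)
    (s : Finset α) (f : α → F) (B : ℝ) (hB : 0 ≤ B) :
    (∀ a ∈ s, ‖f a‖ ≤ B) → ‖∑ a ∈ s, f a‖ ≤ B := by
  classical
  induction s using Finset.induction_on with
  | empty => intro _; simpa using hB
  | @insert a t ha ih =>
    intro h
    rw [Finset.sum_insert ha]
    exact (hna _ _).trans (max_le (h a (Finset.mem_insert_self a t))
      (ih fun b hb => h b (Finset.mem_insert_of_mem hb)))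

lemma norm_nat_le_one (hna : ∀ x y : F, ‖x + y‖ ≤ max ‖x‖ ‖y‖) (n : ℕ) : ‖(n : F)‖ ≤ 1 := by
  induction n with
  | zero => simp
  | succ k ih =>
    push_cast
    exact (hna _ _).trans (max_le ih (by simp))

lemma norm_sub_right (hna : ∀ x y : F, ‖x + y‖ ≤ max ‖x‖ ‖y‖) {a b : F} (h : ‖b‖ < ‖a‖) :
    ‖a - b‖ = ‖a‖ := by
  refine le_antisymm ?_ ?_
  · have h1 := hna a (-b)
    rw [← sub_eq_add_neg, norm_neg] at h1
    exact h1.trans (max_le le_rfl h.le)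
  · by_contra hc
    push_neg at hc
    have h2 : ‖a‖ ≤ max ‖a - b‖ ‖b‖ := by simpa using hna (a - b) b
    exact absurd h2 (not_le.mpr (max_lt hc h))

variable {r : ℕ} {dl : ℕ → ℕ}

abbrev Idx (r : ℕ) (dl : ℕ → ℕ) := (l : Fin r) × Fin (dl l.val)

lemma sigma_eq_of {x y : Idx r dl} (h1 : x.1 = y.1) (h2 : (x.2 : ℕ) = (y.2 : ℕ)) : x = y := by
  obtain ⟨x1, x2⟩ := x
  obtain ⟨y1, y2⟩ := y
  dsimp at h1 h2
  subst h1
  exact congrArg (Sigma.mk x1) (Fin.ext h2)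

lemma entry_congr (M : Matrix (Idx r dl) (Idx r dl) F) (x : Idx r dl) {l : Fin r} {a b : ℕ}
    {ha : a < dl l.val} (hab : a = b) (hb : b < dl l.val) :
    M x ⟨l, ⟨a, ha⟩⟩ = M x ⟨l, ⟨b, hb⟩⟩ := by
  subst hab; rfl

variable (N : Matrix (Idx r dl) (Idx r dl) F)

lemma Npow_apply (hN : ∀ x y, N x y = if x.1 = y.1 ∧ (y.2 : ℕ) = (x.2 : ℕ) + 1 then 1 else 0)
    (k : ℕ) (x y : Idx r dl) :
    (N ^ k) x y = if x.1 = y.1 ∧ (y.2 : ℕ) = (x.2 : ℕ) + k then 1 else 0 := by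
  induction k generalizing y with
  | zero =>
    rw [pow_zero, Matrix.one_apply]
    by_cases h : x = y
    · subst h; simp
    · rw [if_neg h, if_neg]
      rintro ⟨h1, h2⟩
      exact h (sigma_eq_of h1 (by omega))
  | succ k ih =>
    rw [pow_succ, Matrix.mul_apply]
    by_cases h : x.1 = y.1 ∧ (y.2 : ℕ) = (x.2 : ℕ) + (k + 1)
    · obtain ⟨h1, h2⟩ := h
      have hy := y.2.isLt
      have hx : dl x.1.val = dl y.1.val := congrArg (fun t : Fin r => dl t.val) h1
      have hlt : (x.2 : ℕ) + k < dl x.1.val := by omega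
      have hs : ∀ b : Idx r dl, b ∈ Finset.univ → b ≠ (⟨x.1, ⟨(x.2 : ℕ) + k, hlt⟩⟩ : Idx r dl) →
          (N ^ k) x b * N b y = 0 := by
        intro b _ hb
        rw [ih]
        by_cases hc : x.1 = b.1 ∧ (b.2 : ℕ) = (x.2 : ℕ) + k
        · exact absurd (hb (sigma_eq_of hc.1.symm hc.2)) not_false
        · rw [if_neg hc, zero_mul]
      rw [Finset.sum_eq_single _ hs (fun hz => absurd (Finset.mem_univ _) hz)]
      rw [ih, if_pos ⟨rfl, rfl⟩, hN,
        if_pos ⟨h1, show (y.2 : ℕ) = (x.2 : ℕ) + k + 1 by omega⟩, one_mul, if_pos ⟨h1, h2⟩]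
    · rw [if_neg h]
      apply Finset.sum_eq_zero
      intro z _
      rw [ih, hN]
      split_ifs with hA hB
      · exact absurd ⟨hA.1.trans hB.1, by omega⟩ h
      all_goals simp

lemma mul_Npow_apply (hN : ∀ x y, N x y = if x.1 = y.1 ∧ (y.2 : ℕ) = (x.2 : ℕ) + 1 then 1 else 0)
    (M : Matrix (Idx r dl) (Idx r dl) F) (n : ℕ) (x y : Idx r dl) :
    (M * N ^ n) x y = if h : n ≤ (y.2 : ℕ) then
      M x ⟨y.1, ⟨(y.2 : ℕ) - n, Nat.lt_of_le_of_lt (Nat.sub_le _ _) y.2.isLt⟩⟩ else 0 := by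
  rw [Matrix.mul_apply]
  by_cases h : n ≤ (y.2 : ℕ)
  · rw [dif_pos h]
    have hs : ∀ b : Idx r dl, b ∈ Finset.univ →
        b ≠ (⟨y.1, ⟨(y.2 : ℕ) - n, Nat.lt_of_le_of_lt (Nat.sub_le _ _) y.2.isLt⟩⟩ : Idx r dl) →
        M x b * (N ^ n) b y = 0 := by
      intro b _ hb
      rw [Npow_apply N hN, if_neg, mul_zero]
      rintro ⟨h1, h2⟩
      refine hb (sigma_eq_of h1 ?_)
      show (b.2 : ℕ) = (y.2 : ℕ) - n
      omega
    rw [Finset.sum_eq_single _ hs (fun hz => absurd (Finset.mem_univ _) hz)]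
    rw [Npow_apply N hN, if_pos ⟨rfl, (Nat.sub_add_cancel h).symm⟩, mul_one]
  · rw [dif_neg h]
    apply Finset.sum_eq_zero
    intro z _
    rw [Npow_apply N hN, if_neg, mul_zero]
    rintro ⟨h1, h2⟩
    omega

lemma Npow_mul_apply (hN : ∀ x y, N x y = if x.1 = y.1 ∧ (y.2 : ℕ) = (x.2 : ℕ) + 1 then 1 else 0)
    (M : Matrix (Idx r dl) (Idx r dl) F) (k : ℕ) (x y : Idx r dl) :
    (N ^ k * M) x y = if h : (x.2 : ℕ) + k < dl x.1.val then
      M ⟨x.1, ⟨(x.2 : ℕ) + k, h⟩⟩ y else 0 := by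
  rw [Matrix.mul_apply]
  by_cases h : (x.2 : ℕ) + k < dl x.1.val
  · rw [dif_pos h]
    have hs : ∀ b : Idx r dl, b ∈ Finset.univ →
        b ≠ (⟨x.1, ⟨(x.2 : ℕ) + k, h⟩⟩ : Idx r dl) → (N ^ k) x b * M b y = 0 := by
      intro b _ hb
      rw [Npow_apply N hN, if_neg, zero_mul]
      rintro ⟨h1, h2⟩
      exact hb (sigma_eq_of h1.symm h2)
    rw [Finset.sum_eq_single _ hs (fun hz => absurd (Finset.mem_univ _) hz)]
    rw [Npow_apply N hN, if_pos ⟨rfl, rfl⟩, one_mul]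
  · rw [dif_neg h]
    apply Finset.sum_eq_zero
    intro z _
    rw [Npow_apply N hN, if_neg, zero_mul]
    rintro ⟨h1, h2⟩
    apply h
    have hzlt := z.2.isLt
    have hd : dl x.1.val = dl z.1.val := congrArg (fun t : Fin r => dl t.val) h1
    omega

lemma mul_Emap_col_ne (E : Matrix (Idx r dl) (Idx r dl) F) (u : ℕ → F)
    (hE : ∀ x y, E x y =
      if (x.2 : ℕ) = dl x.1.val - 1 ∧ (y.2 : ℕ) = 0 ∧ x.1 ≤ y.1 then
        (-1 : F) ^ ((y.1 : ℕ) - (x.1 : ℕ)) * ∏ e ∈ Finset.Ico (x.1 : ℕ) (y.1 : ℕ), u e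
      else 0)
    (p : ℕ) (hp : p ≠ 0) (A : Matrix (Idx r dl) (Idx r dl) F) (x y : Idx r dl)
    (hy : (y.2 : ℕ) ≠ 0) : (A * E.map fun a => a ^ p) x y = 0 := by
  rw [Matrix.mul_apply]
  apply Finset.sum_eq_zero
  intro z _
  rw [Matrix.map_apply, hE, if_neg, zero_pow hp, mul_zero]
  rintro ⟨-, h2, -⟩
  exact hy h2

lemma mul_El_apply (El : Fin r → Matrix (Idx r dl) (Idx r dl) F)
    (hEl : ∀ l x y, El l x y =
      if x.1 = l ∧ y.1 = l ∧ (x.2 : ℕ) = dl l.val - 1 ∧ (y.2 : ℕ) = 0 then 1 else 0)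
    (lv : Fin r) (hpos : 0 < dl lv.val) (A : Matrix (Idx r dl) (Idx r dl) F) (x y : Idx r dl) :
    (A * El lv) x y = if y.1 = lv ∧ (y.2 : ℕ) = 0 then
      A x ⟨lv, ⟨dl lv.val - 1, Nat.sub_lt hpos one_pos⟩⟩ else 0 := by
  rw [Matrix.mul_apply]
  by_cases hy : y.1 = lv ∧ (y.2 : ℕ) = 0
  · rw [if_pos hy]
    have hs : ∀ b : Idx r dl, b ∈ Finset.univ →
        b ≠ (⟨lv, ⟨dl lv.val - 1, Nat.sub_lt hpos one_pos⟩⟩ : Idx r dl) →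
        A x b * El lv b y = 0 := by
      intro b _ hb
      rw [hEl, if_neg, mul_zero]
      rintro ⟨h1, -, h3, -⟩
      exact hb (sigma_eq_of h1 h3)
    rw [Finset.sum_eq_single _ hs (fun hz => absurd (Finset.mem_univ _) hz)]
    rw [hEl, if_pos ⟨rfl, hy.1, rfl, hy.2⟩, mul_one]
  · rw [if_neg hy]
    apply Finset.sum_eq_zero
    intro z _
    rw [hEl, if_neg, mul_zero]
    rintro ⟨-, h2, -, h4⟩
    exact hy ⟨h2, h4⟩

end LogCoeffAux

open LogCoeffAux

/-- The key estimate on the coefficients `P_i` of the logarithm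
`log_G = Σ P_i τ^i` of the `t`-module `G = G_{s,u}`: if `|u_ℓ|_∞ ≤ q^{s_ℓ q/(q-1)}`
then every entry of `P_i N^{d_ℓ - j} E_ℓ` has absolute value at most
`q^{(d_ℓ - j) q^i − (d_ℓ q^i − d_1) q/(q-1)}`.
Coordinates are indexed by the sigma type `(ℓ : Fin r) × Fin (d_ℓ)` (the block
decomposition of `Fin d`, `d = d_1 + ⋯ + d_r`); indices `ℓ`, blocks and `u` are
0-based, so `d_1 = dl 0` and the `(ℓ,m)` block entry of `E` is
`(-1)^{m-ℓ} ∏_{e=ℓ}^{m-1} u_e`. -/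
theorem log_coefficient_estimate (F : Type*) [NormedField F]
    (hna : ∀ x y : F, ‖x + y‖ ≤ max ‖x‖ ‖y‖)
    (q : ℕ) (hq : 2 ≤ q) (θ : F) (hθ : ‖θ‖ = q)
    (r : ℕ) (hr : 1 ≤ r) (s : ℕ → ℕ) (hs : ∀ e, e < r → 1 ≤ s e)
    (u : ℕ → F) (hu : ∀ e, e + 1 < r → ‖u e‖ ≤ (q : ℝ) ^ ((s e : ℝ) * q / ((q : ℝ) - 1)))
    (dl : ℕ → ℕ) (hdl : ∀ l, dl l = ∑ e ∈ Finset.Ico l r, s e)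
    (N E : Matrix ((l : Fin r) × Fin (dl l.val)) ((l : Fin r) × Fin (dl l.val)) F)
    (hN : ∀ x y, N x y = if x.1 = y.1 ∧ (y.2 : ℕ) = (x.2 : ℕ) + 1 then 1 else 0)
    (hE : ∀ x y, E x y =
      if (x.2 : ℕ) = dl x.1.val - 1 ∧ (y.2 : ℕ) = 0 ∧ x.1 ≤ y.1 then
        (-1 : F) ^ ((y.1 : ℕ) - (x.1 : ℕ)) * ∏ e ∈ Finset.Ico (x.1 : ℕ) (y.1 : ℕ), u e
      else 0)
    (El : Fin r → Matrix ((l : Fin r) × Fin (dl l.val)) ((l : Fin r) × Fin (dl l.val)) F)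
    (hEl : ∀ l x y, El l x y =
      if x.1 = l ∧ y.1 = l ∧ (x.2 : ℕ) = dl l.val - 1 ∧ (y.2 : ℕ) = 0 then 1 else 0)
    (P : ℕ → Matrix ((l : Fin r) × Fin (dl l.val)) ((l : Fin r) × Fin (dl l.val)) F)
    (hP0 : P 0 = 1)
    (hPrec : ∀ i, P (i + 1) = - ∑ m ∈ Finset.range (2 * dl 0 - 1),
      ((θ ^ q ^ (i + 1) - θ) ^ (m + 1))⁻¹ •
        ∑ n ∈ Finset.range (m + 1), ((-1 : F) ^ n * (Nat.choose m n : F)) •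
          (N ^ (m - n) * P i * (E.map fun x => x ^ q ^ i) * N ^ n)) :
    ∀ (i : ℕ) (l : Fin r) (j : ℕ), 1 ≤ j → j ≤ dl l.val →
      ∀ x y, ‖(P i * N ^ (dl l.val - j) * El l) x y‖ ≤
        (q : ℝ) ^ (((dl l.val : ℝ) - j) * (q : ℝ) ^ i -
          ((dl l.val : ℝ) * (q : ℝ) ^ i - (dl 0 : ℝ)) * ((q : ℝ) / ((q : ℝ) - 1))) := by
  classical
  have hq0 : (0:ℝ) < (q:ℝ) := by positivity
  have hq1 : (1:ℝ) < (q:ℝ) := by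
    have h2 : (2:ℝ) ≤ (q:ℝ) := by exact_mod_cast hq
    linarith
  have hQ0 : 0 ≤ (q:ℝ) / ((q:ℝ) - 1) := div_nonneg hq0.le (by linarith)
  have hd_anti : ∀ a b : ℕ, a ≤ b → dl b ≤ dl a := by
    intro a b hab
    rw [hdl, hdl]
    exact Finset.sum_le_sum_of_subset (Finset.Ico_subset_Ico hab le_rfl)
  have hdsum : ∀ a b : ℕ, a ≤ b → b ≤ r → dl a = (∑ e ∈ Finset.Ico a b, s e) + dl b := by
    intro a b h1 h2
    rw [hdl, hdl, ← Finset.sum_Ico_consecutive _ h1 h2]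
  have key : ∀ (i : ℕ) (l : Fin r) (j : ℕ) (hj1 : 1 ≤ j) (hj2 : j ≤ dl l.val)
      (x : (l : Fin r) × Fin (dl l.val)),
      ‖P i x ⟨l, ⟨j - 1, by omega⟩⟩‖ ≤
        (q : ℝ) ^ (((dl l.val : ℝ) - j) * (q : ℝ) ^ i -
          ((dl l.val : ℝ) * (q : ℝ) ^ i - (dl 0 : ℝ)) * ((q : ℝ) / ((q : ℝ) - 1))) := by
    intro i
    induction i with
    | zero =>
      intro l j hj1 hj2 x
      rw [hP0, Matrix.one_apply]
      have hj2' : (j:ℝ) ≤ (dl l.val : ℝ) := by exact_mod_cast hj2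
      have hd0 : (dl l.val : ℝ) ≤ (dl 0 : ℝ) := by
        exact_mod_cast hd_anti 0 l.val (Nat.zero_le _)
      have hexp : 0 ≤ ((dl l.val:ℝ) - j) * (q:ℝ)^0 -
          ((dl l.val:ℝ) * (q:ℝ)^0 - (dl 0:ℝ)) * ((q:ℝ)/((q:ℝ)-1)) := by
        rw [pow_zero]
        nlinarith [mul_nonneg (sub_nonneg.mpr hd0) hQ0]
      split_ifs with h
      · rw [norm_one]
        calc (1:ℝ) = (q:ℝ) ^ (0:ℝ) := (Real.rpow_zero _).symm
          _ ≤ _ := Real.rpow_le_rpow_of_exponent_le hq1.le hexp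
      · rw [norm_zero]
        exact Real.rpow_nonneg hq0.le _
    | succ i ih =>
      intro l j hj1 hj2 x
      have hjlt : j - 1 < dl l.val := by omega
      set Q : ℝ := (q:ℝ) / ((q:ℝ) - 1) with hQdef
      set C : ℝ := (q:ℝ) ^ (((dl 0:ℝ) - (dl l.val:ℝ) * (q:ℝ)^i) * Q) with hCdef
      have hC0 : 0 ≤ C := by rw [hCdef]; exact Real.rpow_nonneg hq0.le _
      -- norm of θ^{q^{i+1}} - θ
      have hKgt : ‖θ‖ < ‖θ ^ q ^ (i+1)‖ := by
        rw [norm_pow, hθ]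
        calc (q:ℝ) = (q:ℝ) ^ 1 := (pow_one _).symm
          _ < (q:ℝ) ^ (q ^ (i+1)) := by
            apply pow_lt_pow_right₀ hq1
            have h1 : 2 ^ (i+1) ≤ q ^ (i+1) := Nat.pow_le_pow_left hq _
            have h2 : 1 < 2 ^ (i+1) := Nat.one_lt_two_pow (by omega)
            omega
      have hKnorm : ‖θ ^ q ^ (i+1) - θ‖ = (q:ℝ) ^ (q ^ (i+1)) := by
        rw [norm_sub_right hna hKgt, norm_pow, hθ]
      -- the central estimate for (N^k * P i * Ẽ) at a column (l, 0)
      have hPE : ∀ (k : ℕ) (x' y' : (l : Fin r) × Fin (dl l.val)), y'.1 = l → (y'.2 : ℕ) = 0 →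
          ‖(N ^ k * P i * (E.map fun a => a ^ q ^ i)) x' y'‖ ≤ C := by
        intro k x' y' hy1 hy2
        rw [Matrix.mul_apply]
        apply nonarch_sum hna _ _ _ hC0
        intro z _
        rw [Matrix.map_apply, hE]
        by_cases hz : (z.2 : ℕ) = dl z.1.val - 1 ∧ (y'.2 : ℕ) = 0 ∧ z.1 ≤ y'.1
        · rw [if_pos hz]
          have hml : (z.1 : ℕ) ≤ (l : ℕ) := by
            have h := hz.2.2
            rw [hy1] at h
            exact Fin.le_def.mp h
          simp only [norm_mul, norm_pow, norm_prod, norm_neg, norm_one, one_pow, one_mul]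
          have hprod : ∏ e ∈ Finset.Ico (z.1 : ℕ) (y'.1 : ℕ), ‖u e‖ ≤
              (q:ℝ) ^ ((∑ e ∈ Finset.Ico (z.1 : ℕ) (y'.1 : ℕ), (s e : ℝ)) * Q) := by
            rw [Finset.sum_mul, Real.rpow_sum_of_pos hq0]
            apply Finset.prod_le_prod (fun e _ => norm_nonneg _)
            intro e he
            have her : e + 1 < r := by
              have h1 := (Finset.mem_Ico.mp he).2
              have h2 := y'.1.isLt
              omega
            have h3 := hu e her
            rw [mul_div_assoc, ← hQdef] at h3
            exact h3
          have hfirst : ‖(N ^ k * P i) x' z‖ ≤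
              (q:ℝ) ^ (((dl z.1.val : ℝ) - (dl z.1.val : ℕ)) * (q:ℝ)^i -
                ((dl z.1.val : ℝ) * (q:ℝ)^i - (dl 0 : ℝ)) * Q) := by
            rw [Npow_mul_apply N hN]
            split_ifs with hh
            · have hz' : z = (⟨z.1, ⟨dl z.1.val - 1,
                  Nat.sub_lt ((Nat.zero_le _).trans_lt z.2.isLt) one_pos⟩⟩ :
                  (l : Fin r) × Fin (dl l.val)) := sigma_eq_of rfl hz.1
              have hih := ih z.1 (dl z.1.val) ((Nat.zero_le _).trans_lt z.2.isLt) le_rfl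
                ⟨x'.1, ⟨(x'.2 : ℕ) + k, hh⟩⟩
              rw [hz']
              exact hih
            · rw [norm_zero]
              exact Real.rpow_nonneg hq0.le _
          refine le_trans (mul_le_mul hfirst
            (pow_le_pow_left₀ (Finset.prod_nonneg fun e _ => norm_nonneg _) hprod _)
            (pow_nonneg (Finset.prod_nonneg fun e _ => norm_nonneg _) _)
            (Real.rpow_nonneg hq0.le _)) ?_
          have hT : (∑ e ∈ Finset.Ico ((z.1 : ℕ)) ((y'.1 : ℕ)), (s e : ℝ)) =
              (dl z.1.val : ℝ) - (dl l.val : ℝ) := by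
            have h1 := hdsum (z.1 : ℕ) (l : ℕ) hml l.isLt.le
            have h2 : (y'.1 : ℕ) = (l : ℕ) := by rw [hy1]
            rw [h2]
            have h3 : ((dl (z.1 : ℕ) : ℕ) : ℝ) =
                ((∑ e ∈ Finset.Ico (z.1 : ℕ) (l : ℕ), s e : ℕ) : ℝ) + ((dl (l : ℕ) : ℕ) : ℝ) := by
              exact_mod_cast h1
            push_cast at h3 ⊢
            linarith
          rw [← Real.rpow_natCast
              ((q:ℝ) ^ ((∑ e ∈ Finset.Ico ((z.1 : ℕ)) ((y'.1 : ℕ)), (s e : ℝ)) * Q)) (q ^ i),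
            ← Real.rpow_mul hq0.le, ← Real.rpow_add hq0, hCdef]
          apply le_of_eq
          congr 1
          rw [hT]
          push_cast
          ring
        · rw [if_neg hz, zero_pow (pow_ne_zero i (by omega)), mul_zero, norm_zero]
          exact hC0
      -- main computation
      rw [hPrec i, Matrix.neg_apply, Matrix.sum_apply, norm_neg]
      apply nonarch_sum hna _ _ _ (Real.rpow_nonneg hq0.le _)
      intro m hm
      rw [Matrix.smul_apply, smul_eq_mul, norm_mul]
      by_cases hmj : m + 1 < j
      · have hzero : (∑ n ∈ Finset.range (m+1), ((-1:F)^n * (Nat.choose m n : F)) •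
            (N^(m-n) * P i * (E.map fun a => a ^ q ^ i) * N^n)) x ⟨l, ⟨j-1, hjlt⟩⟩ = 0 := by
          rw [Matrix.sum_apply]
          apply Finset.sum_eq_zero
          intro n hn
          have hn' : n < m + 1 := Finset.mem_range.mp hn
          rw [Matrix.smul_apply, smul_eq_mul]
          rw [mul_Npow_apply N hN, dif_pos (show n ≤ j - 1 by omega)]
          rw [mul_Emap_col_ne E u hE _ (pow_ne_zero i (by omega)) _ _ _
            (show j - 1 - n ≠ 0 by omega), mul_zero]
        rw [hzero, norm_zero, mul_zero]
        exact Real.rpow_nonneg hq0.le _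
      · push_neg at hmj
        have hinner : ‖(∑ n ∈ Finset.range (m+1), ((-1:F)^n * (Nat.choose m n : F)) •
            (N^(m-n) * P i * (E.map fun a => a ^ q ^ i) * N^n)) x ⟨l, ⟨j-1, hjlt⟩⟩‖ ≤ C := by
          rw [Matrix.sum_apply]
          apply nonarch_sum hna _ _ _ hC0
          intro n _
          rw [Matrix.smul_apply, smul_eq_mul, norm_mul]
          have hcoef : ‖(-1:F)^n * (Nat.choose m n : F)‖ ≤ 1 := by
            rw [norm_mul, norm_pow, norm_neg, norm_one, one_pow, one_mul]
            exact norm_nat_le_one hna _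
          have hmat : ‖(N^(m-n) * P i * (E.map fun a => a ^ q ^ i) * N^n) x
              ⟨l, ⟨j-1, hjlt⟩⟩‖ ≤ C := by
            rw [mul_Npow_apply N hN]
            split_ifs with hn
            · have hn1 : n ≤ j - 1 := hn
              by_cases hn2 : n = j - 1
              · refine hPE (m - n) x _ rfl ?_
                show j - 1 - n = 0
                omega
              · rw [mul_Emap_col_ne E u hE _ (pow_ne_zero i (by omega)) _ _ _
                  (show j - 1 - n ≠ 0 by omega), norm_zero]
                exact hC0
            · rw [norm_zero]
              exact hC0
          calc ‖(-1:F)^n * (Nat.choose m n : F)‖ * _ ≤ 1 * C :=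
              mul_le_mul hcoef hmat (norm_nonneg _) zero_le_one
            _ = C := one_mul C
        have hinv : ‖((θ ^ q ^ (i+1) - θ) ^ (m+1))⁻¹‖ =
            (q:ℝ) ^ (-(((m:ℝ)+1) * ((q:ℝ)^(i+1)))) := by
          rw [norm_inv, norm_pow, hKnorm, ← Real.rpow_natCast (q:ℝ) (q ^ (i+1)),
            ← Real.rpow_natCast ((q:ℝ) ^ (((q:ℕ) ^ (i+1) : ℕ) : ℝ)) (m+1),
            ← Real.rpow_mul hq0.le, ← Real.rpow_neg hq0.le]
          congr 1
          push_cast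
          ring
        have hstep : ‖((θ ^ q ^ (i+1) - θ) ^ (m+1))⁻¹‖ *
            ‖(∑ n ∈ Finset.range (m+1), ((-1:F)^n * (Nat.choose m n : F)) •
              (N^(m-n) * P i * (E.map fun a => a ^ q ^ i) * N^n)) x ⟨l, ⟨j-1, hjlt⟩⟩‖ ≤
            (q:ℝ) ^ (-(((m:ℝ)+1) * ((q:ℝ)^(i+1)))) * C :=
          mul_le_mul (le_of_eq hinv) hinner (norm_nonneg _) (Real.rpow_nonneg hq0.le _)
        refine hstep.trans ?_
        rw [hCdef, ← Real.rpow_add hq0]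
        apply Real.rpow_le_rpow_of_exponent_le hq1.le
        have hjm : (j:ℝ) ≤ (m:ℝ) + 1 := by exact_mod_cast hmj
        have hK0 : (0:ℝ) ≤ (q:ℝ)^(i+1) := by positivity
        have hq1ne : (q:ℝ) - 1 ≠ 0 := by linarith
        have hexp_eq : (-(((m:ℝ)+1) * ((q:ℝ)^(i+1))) +
            ((dl 0:ℝ) - (dl l.val:ℝ) * (q:ℝ)^i) * Q)
            = ((((dl l.val:ℝ) - j) * (q:ℝ)^(i+1) -
              ((dl l.val:ℝ) * (q:ℝ)^(i+1) - (dl 0:ℝ)) * Q)) -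
              (((m:ℝ)+1) - j) * (q:ℝ)^(i+1) := by
          rw [hQdef]
          field_simp
          ring
        rw [hexp_eq]
        have := mul_nonneg (sub_nonneg.mpr hjm) hK0
        linarith [mul_nonneg (sub_nonneg.mpr hjm) hK0]
  -- deduce the statement about P i * N^(dl l - j) * El l
  intro i l j hj1 hj2 x y
  have hpos : 0 < dl l.val := lt_of_lt_of_le hj1 hj2
  rw [mul_El_apply El hEl l hpos]
  split_ifs with hy
  · rw [mul_Npow_apply N hN, dif_pos (show dl l.val - j ≤ dl l.val - 1 by omega)]
    convert key i l j hj1 hj2 x using 3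
    exact sigma_eq_of rfl (show dl l.val - 1 - (dl l.val - j) = j - 1 by omega)
  · rw [norm_zero]
    exact Real.rpow_nonneg hq0.le _
end

section
/- With notation as in the previous estimate (s ∈ N^r, d_ℓ, d, and G = G_{s,u} with |u_ℓ|_∞ ≤ q^{s_ℓ q/(q-1)} for ℓ < r): if x = (x_m) ∈ C_∞^d satisfies |x_{d_1 + ··· + d_{ℓ-1} + j}|_∞ < q^{−(d_ℓ − j) + d_ℓ q/(q-1)} for all 1 ≤ ℓ ≤ r and 1 ≤ j ≤ d_ℓ, then |P_i x^{(i)}|_∞ → 0 as i → ∞, where x^{(i)} raises each entry to the q^i power; hence log_G(x) = Σ_{i≥0} P_i x^{(i)} converges in C_∞^d. -/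
open IsUltrametricDist Filter

private lemma rpow_finset_sum {x : ℝ} (hx : 0 < x) (t : Finset ℕ) (f : ℕ → ℝ) :
    x ^ (∑ e ∈ t, f e) = ∏ e ∈ t, x ^ f e := by
  classical
  induction t using Finset.induction_on with
  | empty => simp
  | insert _ _ ha ih =>
    rw [Finset.sum_insert ha, Finset.prod_insert ha, Real.rpow_add hx, ih]

/-- Convergence of `log_G` at points in the polydisc: with the same data
as in the coefficient estimate, if the coordinate of `x` in block `ℓ` at (1-based)
position `j` satisfies `|x|_∞ < q^{-(d_ℓ - j) + d_ℓ q/(q-1)}`, then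
`|P_i x^{(i)}|_∞ → 0` and `log_G(x) = Σ_i P_i x^{(i)}` converges in `C_∞^d`. -/
theorem log_converges_on_polydisc (F : Type*) [NormedField F] [CompleteSpace F]
    (hna : ∀ x y : F, ‖x + y‖ ≤ max ‖x‖ ‖y‖)
    (q : ℕ) (hq : 2 ≤ q) (θ : F) (hθ : ‖θ‖ = q)
    (r : ℕ) (hr : 1 ≤ r) (s : ℕ → ℕ) (hs : ∀ e, e < r → 1 ≤ s e)
    (u : ℕ → F) (hu : ∀ e, e + 1 < r → ‖u e‖ ≤ (q : ℝ) ^ ((s e : ℝ) * q / ((q : ℝ) - 1)))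
    (dl : ℕ → ℕ) (hdl : ∀ l, dl l = ∑ e ∈ Finset.Ico l r, s e)
    (N E : Matrix ((l : Fin r) × Fin (dl l.val)) ((l : Fin r) × Fin (dl l.val)) F)
    (hN : ∀ x y, N x y = if x.1 = y.1 ∧ (y.2 : ℕ) = (x.2 : ℕ) + 1 then 1 else 0)
    (hE : ∀ x y, E x y =
      if (x.2 : ℕ) = dl x.1.val - 1 ∧ (y.2 : ℕ) = 0 ∧ x.1 ≤ y.1 then
        (-1 : F) ^ ((y.1 : ℕ) - (x.1 : ℕ)) * ∏ e ∈ Finset.Ico (x.1 : ℕ) (y.1 : ℕ), u e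
      else 0)
    (P : ℕ → Matrix ((l : Fin r) × Fin (dl l.val)) ((l : Fin r) × Fin (dl l.val)) F)
    (hP0 : P 0 = 1)
    (hPrec : ∀ i, P (i + 1) = - ∑ m ∈ Finset.range (2 * dl 0 - 1),
      ((θ ^ q ^ (i + 1) - θ) ^ (m + 1))⁻¹ •
        ∑ n ∈ Finset.range (m + 1), ((-1 : F) ^ n * (Nat.choose m n : F)) •
          (N ^ (m - n) * P i * (E.map fun z => z ^ q ^ i) * N ^ n))
    (x : ((l : Fin r) × Fin (dl l.val)) → F)
    (hx : ∀ (l : Fin r) (j : Fin (dl l.val)),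
      ‖x ⟨l, j⟩‖ < (q : ℝ) ^ (-((dl l.val : ℝ) - ((j : ℕ) + 1)) +
        (dl l.val : ℝ) * q / ((q : ℝ) - 1))) :
    (∀ a : (l : Fin r) × Fin (dl l.val),
      Filter.Tendsto (fun i : ℕ => ‖((P i).mulVec fun b => x b ^ q ^ i) a‖)
        Filter.atTop (nhds 0)) ∧
    (∀ a : (l : Fin r) × Fin (dl l.val),
      ∃ S : F, HasSum (fun i : ℕ => ((P i).mulVec fun b => x b ^ q ^ i) a) S) := by
  classical
  haveI hult : IsUltrametricDist F := isUltrametricDist_of_isNonarchimedean_norm hna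
  have hq1 : (1 : ℝ) < (q : ℝ) := by exact_mod_cast hq
  have hq0 : (0 : ℝ) < (q : ℝ) := by linarith
  have hqm : (0 : ℝ) < (q : ℝ) - 1 := by linarith
  -- facts about dl
  have hdl_anti : ∀ k l : ℕ, k ≤ l → dl l ≤ dl k := by
    intro k l h
    rw [hdl, hdl]
    exact Finset.sum_le_sum_of_subset (Finset.Ico_subset_Ico h le_rfl)
  have hdl_pos : ∀ l, l < r → 1 ≤ dl l := by
    intro l hl
    rw [hdl]
    calc 1 ≤ s l := hs l hl
      _ ≤ _ := Finset.single_le_sum (f := s) (fun e _ => Nat.zero_le _)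
          (Finset.mem_Ico.mpr ⟨le_rfl, hl⟩)
  have hdl_split : ∀ k l : ℕ, k ≤ l → l ≤ r → dl k = (∑ e ∈ Finset.Ico k l, s e) + dl l := by
    intro k l hkl hlr
    rw [hdl, hdl, Finset.sum_Ico_consecutive _ hkl hlr]
  -- N powers
  have hNpow : ∀ (k : ℕ) (a b : (l : Fin r) × Fin (dl l.val)),
      (N ^ k) a b = if a.1 = b.1 ∧ (b.2 : ℕ) = (a.2 : ℕ) + k then 1 else 0 := by
    intro k
    induction k with
    | zero =>
      rintro ⟨la, ja⟩ ⟨lb, jb⟩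
      rw [pow_zero, Matrix.one_apply]
      by_cases h : la = lb
      · subst h
        simp [Sigma.ext_iff, Fin.ext_iff, eq_comm]
      · simp [Sigma.ext_iff, h]
    | succ k ih =>
      rintro ⟨la, ja⟩ ⟨lb, jb⟩
      rw [pow_succ, Matrix.mul_apply]
      by_cases hk : (ja : ℕ) + k < dl la.val
      · rw [Finset.sum_eq_single (⟨la, ⟨(ja : ℕ) + k, hk⟩⟩ : (l : Fin r) × Fin (dl l.val))]
        · rw [ih, hN]
          simp [add_assoc]
        · rintro ⟨lz, jz⟩ _ hz
          rw [ih]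
          by_cases h1 : la = lz ∧ (jz : ℕ) = (ja : ℕ) + k
          · exfalso
            apply hz
            obtain ⟨h1a, h1b⟩ := h1
            subst h1a
            exact congrArg (fun t => (⟨la, t⟩ : (l : Fin r) × Fin (dl l.val))) (Fin.ext h1b)
          · rw [if_neg h1, zero_mul]
        · intro h
          exact absurd (Finset.mem_univ _) h
      · have h1 : ∀ z : (l : Fin r) × Fin (dl l.val),
            (N ^ k) ⟨la, ja⟩ z * N z ⟨lb, jb⟩ = 0 := by
          rintro ⟨lz, jz⟩
          rw [ih]
          by_cases h1 : la = lz ∧ (jz : ℕ) = (ja : ℕ) + k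
          · exfalso
            obtain ⟨h1a, h1b⟩ := h1
            subst h1a
            exact hk (h1b ▸ jz.isLt)
          · rw [if_neg h1, zero_mul]
        rw [Finset.sum_congr rfl fun z _ => h1 z, Finset.sum_const, smul_zero]
        rw [if_neg]
        rintro ⟨h2, h3⟩
        subst h2
        change (jb : ℕ) = (ja : ℕ) + (k + 1) at h3
        have h4 : (jb : ℕ) < dl la.val := jb.isLt
        omega
  have hNnorm : ∀ (k : ℕ) (a b : (l : Fin r) × Fin (dl l.val)), ‖(N ^ k) a b‖ ≤ 1 := by
    intro k a b
    rw [hNpow]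
    split
    · simp
    · simp
  have hθQ : ∀ Q : ℕ, 2 ≤ Q → ‖θ ^ Q - θ‖ = (q : ℝ) ^ Q := by
    intro Q hQ
    have h1 : ‖θ ^ Q‖ = (q : ℝ) ^ Q := by rw [norm_pow, hθ]
    have h2 : ‖θ‖ < ‖θ ^ Q‖ := by
      rw [hθ, h1]
      calc (q : ℝ) = (q : ℝ) ^ 1 := (pow_one _).symm
        _ < _ := by exact pow_lt_pow_right₀ hq1 (by omega)
    apply le_antisymm
    · calc ‖θ ^ Q - θ‖ ≤ max ‖θ ^ Q‖ ‖-θ‖ := by rw [sub_eq_add_neg]; exact hna _ _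
        _ = ‖θ ^ Q‖ := by rw [norm_neg, max_eq_left h2.le]
        _ = _ := h1
    · by_contra hlt
      push_neg at hlt
      have h3 : ‖θ ^ Q‖ ≤ max ‖θ ^ Q - θ‖ ‖θ‖ := by
        calc ‖θ ^ Q‖ = ‖(θ ^ Q - θ) + θ‖ := by rw [sub_add_cancel]
          _ ≤ _ := hna _ _
      rw [h1] at h3 h2
      have h4 : max ‖θ ^ Q - θ‖ ‖θ‖ < (q : ℝ) ^ Q := max_lt hlt h2
      linarith
  -- the key coefficient estimate
  have key : ∀ (i : ℕ) (a b : (l : Fin r) × Fin (dl l.val)),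
      ‖P i a b‖ ≤ (q : ℝ) ^ ((dl 0 : ℝ) * q / ((q : ℝ) - 1) +
        (q : ℝ) ^ i * (((dl b.1.val : ℝ) - ((b.2 : ℕ) + 1)) -
          (dl b.1.val : ℝ) * q / ((q : ℝ) - 1))) := by
    intro i
    induction i with
    | zero =>
      intro a b
      have hb1 : (dl b.1.val : ℝ) ≤ (dl 0 : ℝ) := by
        exact_mod_cast hdl_anti 0 b.1.val (Nat.zero_le _)
      have hb2 : ((b.2 : ℕ) : ℝ) + 1 ≤ (dl b.1.val : ℝ) := by
        have := b.2.isLt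
        exact_mod_cast this
      have hexp : (0 : ℝ) ≤ (dl 0 : ℝ) * q / ((q : ℝ) - 1) +
          (q : ℝ) ^ 0 * (((dl b.1.val : ℝ) - ((b.2 : ℕ) + 1)) -
            (dl b.1.val : ℝ) * q / ((q : ℝ) - 1)) := by
        have h5 : (dl b.1.val : ℝ) * q / ((q : ℝ) - 1) ≤ (dl 0 : ℝ) * q / ((q : ℝ) - 1) := by
          gcongr
        simp only [pow_zero, one_mul]
        linarith
      rw [hP0, Matrix.one_apply]
      split
      · rw [norm_one]
        calc (1 : ℝ) = (q : ℝ) ^ (0 : ℝ) := (Real.rpow_zero _).symm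
          _ ≤ _ := Real.rpow_le_rpow_of_exponent_le hq1.le hexp
      · rw [norm_zero]
        exact (Real.rpow_pos_of_pos hq0 _).le
    | succ i ih =>
      intro a b
      obtain ⟨ℓ, j⟩ := b
      show ‖P (i+1) a ⟨ℓ, j⟩‖ ≤ (q : ℝ) ^ ((dl 0 : ℝ) * q / ((q : ℝ) - 1) +
        (q : ℝ) ^ (i+1) * (((dl ℓ.val : ℝ) - ((j : ℕ) + 1)) -
          (dl ℓ.val : ℝ) * q / ((q : ℝ) - 1)))
      have hQ2 : 2 ≤ q ^ (i + 1) := le_trans hq (Nat.le_self_pow (by omega) q)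
      have hzerocol : ∀ (K : ℕ) (z : (l : Fin r) × Fin (dl l.val)), (z.2 : ℕ) ≠ 0 →
          (N ^ K * P i * (E.map fun w => w ^ q ^ i)) a z = 0 := by
        intro K z hz0
        rw [Matrix.mul_apply]
        apply Finset.sum_eq_zero
        intro y _
        rw [Matrix.map_apply, hE, if_neg (by tauto), zero_pow (pow_ne_zero i (by omega)),
          mul_zero]
      have hcol : ∀ (K : ℕ) (z : (l : Fin r) × Fin (dl l.val)), z.1 = ℓ → (z.2 : ℕ) = 0 →
          ‖(N ^ K * P i * (E.map fun w => w ^ q ^ i)) a z‖ ≤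
            (q : ℝ) ^ ((dl 0 : ℝ) * q / ((q : ℝ) - 1) -
              (q : ℝ) ^ i * ((dl ℓ.val : ℝ) * q / ((q : ℝ) - 1))) := by
        intro K z hz1 hz0
        rw [Matrix.mul_apply]
        apply norm_sum_le_of_forall_le_of_nonneg (Real.rpow_pos_of_pos hq0 _).le
        intro y _
        rw [norm_mul, Matrix.map_apply]
        by_cases hy : (y.2 : ℕ) = dl y.1.val - 1 ∧ (z.2 : ℕ) = 0 ∧ y.1 ≤ z.1
        · have hyr : (y.1 : ℕ) < r := y.1.isLt
          have hzr : (ℓ : ℕ) < r := ℓ.isLt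
          have hdly : 1 ≤ dl y.1.val := hdl_pos _ hyr
          have hyl : y.1 ≤ ℓ := hz1 ▸ hy.2.2
          have hle : dl ℓ.val ≤ dl y.1.val := hdl_anti _ _ hyl
          have hS : (∑ e ∈ Finset.Ico (y.1 : ℕ) (ℓ : ℕ), s e) = dl y.1.val - dl ℓ.val := by
            have := hdl_split (y.1 : ℕ) (ℓ : ℕ) hyl (le_of_lt hzr)
            omega
          have hE1 : ‖E y z‖ ≤
              (q : ℝ) ^ (((dl y.1.val : ℝ) - (dl ℓ.val : ℝ)) * q / ((q : ℝ) - 1)) := by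
            rw [hE, if_pos hy, norm_mul, norm_pow, norm_neg, norm_one, one_pow, one_mul,
              norm_prod]
            have hz1' : (z.1 : ℕ) = (ℓ : ℕ) := by rw [hz1]
            rw [hz1']
            calc ∏ e ∈ Finset.Ico (y.1 : ℕ) (ℓ : ℕ), ‖u e‖
                ≤ ∏ e ∈ Finset.Ico (y.1 : ℕ) (ℓ : ℕ),
                    (q : ℝ) ^ ((s e : ℝ) * q / ((q : ℝ) - 1)) := by
                  apply Finset.prod_le_prod (fun e _ => norm_nonneg _)
                  intro e he
                  apply hu
                  have := (Finset.mem_Ico.mp he).2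
                  omega
              _ = (q : ℝ) ^ (∑ e ∈ Finset.Ico (y.1 : ℕ) (ℓ : ℕ),
                            (s e : ℝ) * q / ((q : ℝ) - 1)) :=
                  (rpow_finset_sum hq0 _ _).symm
              _ = _ := by
                  congr 1
                  rw [← Finset.sum_div, ← Finset.sum_mul, ← Nat.cast_sum, hS]
                  rw [Nat.cast_sub hle]
          have hPy : ‖(N ^ K * P i) a y‖ ≤ (q : ℝ) ^ ((dl 0 : ℝ) * q / ((q : ℝ) - 1) +
              (q : ℝ) ^ i * (((dl y.1.val : ℝ) - ((y.2 : ℕ) + 1)) -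
                (dl y.1.val : ℝ) * q / ((q : ℝ) - 1))) := by
            rw [Matrix.mul_apply]
            apply norm_sum_le_of_forall_le_of_nonneg (Real.rpow_pos_of_pos hq0 _).le
            intro w _
            rw [norm_mul]
            calc ‖(N ^ K) a w‖ * ‖P i w y‖ ≤ 1 * ‖P i w y‖ :=
                  mul_le_mul_of_nonneg_right (hNnorm K a w) (norm_nonneg _)
              _ = ‖P i w y‖ := one_mul _
              _ ≤ _ := ih w y
          have hy2R : ((y.2 : ℕ) : ℝ) = (dl y.1.val : ℝ) - 1 := by
            rw [hy.1]
            push_cast [hdly]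
            ring
          calc ‖(N ^ K * P i) a y‖ * ‖E y z ^ q ^ i‖
              ≤ ((q : ℝ) ^ ((dl 0 : ℝ) * q / ((q : ℝ) - 1) +
                  (q : ℝ) ^ i * (((dl y.1.val : ℝ) - ((y.2 : ℕ) + 1)) -
                    (dl y.1.val : ℝ) * q / ((q : ℝ) - 1)))) *
                ((q : ℝ) ^ (((dl y.1.val : ℝ) - (dl ℓ.val : ℝ)) * q / ((q : ℝ) - 1))) ^ q ^ i := by
                apply mul_le_mul hPy ?_ (norm_nonneg _) (Real.rpow_pos_of_pos hq0 _).le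
                rw [norm_pow]
                exact pow_le_pow_left₀ (norm_nonneg _) hE1 _
            _ = _ := by
                rw [← Real.rpow_natCast
                  ((q : ℝ) ^ (((dl y.1.val : ℝ) - (dl ℓ.val : ℝ)) * q / ((q : ℝ) - 1))) (q ^ i),
                  ← Real.rpow_mul hq0.le, ← Real.rpow_add hq0]
                congr 1
                rw [hy2R]
                push_cast
                ring
        · rw [hE, if_neg hy, zero_pow (pow_ne_zero i (by omega)), norm_zero, mul_zero]
          exact (Real.rpow_pos_of_pos hq0 _).le
      rw [hPrec i, Matrix.neg_apply, Matrix.sum_apply, norm_neg]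
      apply norm_sum_le_of_forall_le_of_nonneg (Real.rpow_pos_of_pos hq0 _).le
      intro m hm
      by_cases hjm : (j : ℕ) ≤ m
      · rw [Matrix.smul_apply, smul_eq_mul, norm_mul]
        have hscal : ‖((θ ^ q ^ (i+1) - θ) ^ (m+1))⁻¹‖ =
            (q : ℝ) ^ (-(((q : ℝ) ^ (i+1)) * ((m : ℝ) + 1))) := by
          rw [norm_inv, norm_pow, hθQ _ hQ2,
            ← Real.rpow_natCast (q : ℝ) (q ^ (i+1)), ← Real.rpow_natCast _ (m+1),
            ← Real.rpow_mul hq0.le, ← Real.rpow_neg hq0.le]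
          congr 1
          push_cast
          ring
        have hinner : ‖(∑ n ∈ Finset.range (m+1), ((-1 : F) ^ n * (Nat.choose m n : F)) •
            (N ^ (m-n) * P i * (E.map fun w => w ^ q ^ i) * N ^ n)) a ⟨ℓ, j⟩‖ ≤
            (q : ℝ) ^ ((dl 0 : ℝ) * q / ((q : ℝ) - 1) -
              (q : ℝ) ^ i * ((dl ℓ.val : ℝ) * q / ((q : ℝ) - 1))) := by
          rw [Matrix.sum_apply]
          apply norm_sum_le_of_forall_le_of_nonneg (Real.rpow_pos_of_pos hq0 _).le
          intro n _
          rw [Matrix.smul_apply, smul_eq_mul, norm_mul]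
          have hcoef : ‖(-1 : F) ^ n * (Nat.choose m n : F)‖ ≤ 1 := by
            rw [norm_mul, norm_pow, norm_neg, norm_one, one_pow, one_mul]
            exact norm_natCast_le_one F _
          have hmat : ‖(N ^ (m-n) * P i * (E.map fun w => w ^ q ^ i) * N ^ n) a ⟨ℓ, j⟩‖ ≤
              (q : ℝ) ^ ((dl 0 : ℝ) * q / ((q : ℝ) - 1) -
                (q : ℝ) ^ i * ((dl ℓ.val : ℝ) * q / ((q : ℝ) - 1))) := by
            rw [Matrix.mul_apply]
            apply norm_sum_le_of_forall_le_of_nonneg (Real.rpow_pos_of_pos hq0 _).le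
            intro z _
            rw [norm_mul]
            by_cases hz : z.1 = ℓ ∧ (j : ℕ) = (z.2 : ℕ) + n
            · by_cases hz0 : (z.2 : ℕ) = 0
              · calc ‖(N ^ (m-n) * P i * (E.map fun w => w ^ q ^ i)) a z‖ *
                    ‖(N ^ n) z ⟨ℓ, j⟩‖
                    ≤ ((q : ℝ) ^ ((dl 0 : ℝ) * q / ((q : ℝ) - 1) -
                        (q : ℝ) ^ i * ((dl ℓ.val : ℝ) * q / ((q : ℝ) - 1)))) * 1 :=
                      mul_le_mul (hcol (m-n) z hz.1 hz0) (hNnorm n z _) (norm_nonneg _)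
                        (Real.rpow_pos_of_pos hq0 _).le
                  _ = _ := mul_one _
              · rw [hzerocol (m-n) z hz0, norm_zero, zero_mul]
                exact (Real.rpow_pos_of_pos hq0 _).le
            · rw [hNpow, if_neg (by exact hz), norm_zero, mul_zero]
              exact (Real.rpow_pos_of_pos hq0 _).le
          calc ‖(-1 : F) ^ n * (Nat.choose m n : F)‖ *
              ‖(N ^ (m-n) * P i * (E.map fun w => w ^ q ^ i) * N ^ n) a ⟨ℓ, j⟩‖
              ≤ 1 * ((q : ℝ) ^ ((dl 0 : ℝ) * q / ((q : ℝ) - 1) -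
                  (q : ℝ) ^ i * ((dl ℓ.val : ℝ) * q / ((q : ℝ) - 1)))) :=
                mul_le_mul hcoef hmat (norm_nonneg _) zero_le_one
            _ = _ := one_mul _
        calc ‖((θ ^ q ^ (i+1) - θ) ^ (m+1))⁻¹‖ *
            ‖(∑ n ∈ Finset.range (m+1), ((-1 : F) ^ n * (Nat.choose m n : F)) •
              (N ^ (m-n) * P i * (E.map fun w => w ^ q ^ i) * N ^ n)) a ⟨ℓ, j⟩‖
            ≤ (q : ℝ) ^ (-(((q : ℝ) ^ (i+1)) * ((m : ℝ) + 1))) *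
              ((q : ℝ) ^ ((dl 0 : ℝ) * q / ((q : ℝ) - 1) -
                (q : ℝ) ^ i * ((dl ℓ.val : ℝ) * q / ((q : ℝ) - 1)))) := by
              rw [hscal]
              exact mul_le_mul_of_nonneg_left hinner (Real.rpow_pos_of_pos hq0 _).le
          _ ≤ (q : ℝ) ^ (-(((q : ℝ) ^ (i+1)) * (((j : ℕ) : ℝ) + 1))) *
              ((q : ℝ) ^ ((dl 0 : ℝ) * q / ((q : ℝ) - 1) -
                (q : ℝ) ^ i * ((dl ℓ.val : ℝ) * q / ((q : ℝ) - 1)))) := by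
              apply mul_le_mul_of_nonneg_right _ (Real.rpow_pos_of_pos hq0 _).le
              apply Real.rpow_le_rpow_of_exponent_le hq1.le
              have hA : (0 : ℝ) < (q : ℝ) ^ (i+1) := pow_pos hq0 _
              have hjm' : ((j : ℕ) : ℝ) ≤ (m : ℝ) := by exact_mod_cast hjm
              nlinarith
          _ = _ := by
              rw [← Real.rpow_add hq0]
              congr 1
              rw [pow_succ]
              field_simp
              ring_nf
      · have hmz : (((θ ^ q ^ (i+1) - θ) ^ (m+1))⁻¹ • ∑ n ∈ Finset.range (m+1),
            ((-1 : F) ^ n * (Nat.choose m n : F)) •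
            (N ^ (m-n) * P i * (E.map fun w => w ^ q ^ i) * N ^ n)) a ⟨ℓ, j⟩ = 0 := by
          rw [Matrix.smul_apply, Matrix.sum_apply]
          have h0 : ∀ n ∈ Finset.range (m+1), (((-1 : F) ^ n * (Nat.choose m n : F)) •
              (N ^ (m-n) * P i * (E.map fun w => w ^ q ^ i) * N ^ n)) a ⟨ℓ, j⟩ = 0 := by
            intro n hn
            rw [Matrix.smul_apply, smul_eq_mul]
            have hmat0 : (N ^ (m-n) * P i * (E.map fun w => w ^ q ^ i) * N ^ n) a ⟨ℓ, j⟩ = 0 := by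
              rw [Matrix.mul_apply]
              apply Finset.sum_eq_zero
              intro z _
              by_cases hz1 : z.1 = ℓ ∧ (j : ℕ) = (z.2 : ℕ) + n
              · have hn' : n < m + 1 := Finset.mem_range.mp hn
                have hz0 : (z.2 : ℕ) ≠ 0 := by
                  have h6 := hz1.2
                  omega
                rw [hzerocol (m-n) z hz0, zero_mul]
              · rw [hNpow, if_neg (by exact hz1), mul_zero]
            rw [hmat0, mul_zero]
          rw [Finset.sum_eq_zero h0, smul_zero]
        rw [hmz, norm_zero]
        exact (Real.rpow_pos_of_pos hq0 _).le
  -- final assembly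
  haveI hι : Nonempty ((l : Fin r) × Fin (dl l.val)) :=
    ⟨⟨⟨0, hr⟩, ⟨0, hdl_pos 0 hr⟩⟩⟩
  have hexists : ∃ ρ : ℝ, 0 ≤ ρ ∧ ρ < 1 ∧ ∀ b : (l : Fin r) × Fin (dl l.val),
      ‖x b‖ ≤ ρ * (q : ℝ) ^ (-((dl b.1.val : ℝ) - ((b.2 : ℕ) + 1)) +
        (dl b.1.val : ℝ) * q / ((q : ℝ) - 1)) := by
    refine ⟨Finset.univ.sup' Finset.univ_nonempty (fun b : (l : Fin r) × Fin (dl l.val) =>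
      ‖x b‖ / (q : ℝ) ^ (-((dl b.1.val : ℝ) - ((b.2 : ℕ) + 1)) +
        (dl b.1.val : ℝ) * q / ((q : ℝ) - 1))), ?_, ?_, ?_⟩
    · obtain ⟨b⟩ := hι
      refine le_trans (div_nonneg (norm_nonneg (x b)) (Real.rpow_pos_of_pos hq0
          (-((dl b.1.val : ℝ) - ((b.2 : ℕ) + 1)) + (dl b.1.val : ℝ) * q / ((q : ℝ) - 1))).le)
        (Finset.le_sup' (fun b : (l : Fin r) × Fin (dl l.val) =>
          ‖x b‖ / (q : ℝ) ^ (-((dl b.1.val : ℝ) - ((b.2 : ℕ) + 1)) +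
            (dl b.1.val : ℝ) * q / ((q : ℝ) - 1))) (Finset.mem_univ b))
    · rw [Finset.sup'_lt_iff]
      rintro ⟨l, j⟩ _
      exact (div_lt_one (Real.rpow_pos_of_pos hq0 _)).mpr (hx l j)
    · intro b
      exact (div_le_iff₀ (Real.rpow_pos_of_pos hq0 _)).mp
        (Finset.le_sup' (fun b : (l : Fin r) × Fin (dl l.val) =>
          ‖x b‖ / (q : ℝ) ^ (-((dl b.1.val : ℝ) - ((b.2 : ℕ) + 1)) +
            (dl b.1.val : ℝ) * q / ((q : ℝ) - 1))) (Finset.mem_univ b))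
  obtain ⟨ρ, hρ0, hρ1, hxb⟩ := hexists
  have hbound : ∀ (i : ℕ) (a : (l : Fin r) × Fin (dl l.val)),
      ‖((P i).mulVec fun b => x b ^ q ^ i) a‖ ≤
        (q : ℝ) ^ ((dl 0 : ℝ) * q / ((q : ℝ) - 1)) * ρ ^ q ^ i := by
    intro i a
    simp only [Matrix.mulVec, dotProduct]
    apply norm_sum_le_of_forall_le_of_nonneg
      (mul_nonneg (Real.rpow_pos_of_pos hq0 _).le (pow_nonneg hρ0 _))
    intro b _
    rw [norm_mul, norm_pow]
    calc ‖P i a b‖ * ‖x b‖ ^ q ^ i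
        ≤ ((q : ℝ) ^ ((dl 0 : ℝ) * q / ((q : ℝ) - 1) +
            (q : ℝ) ^ i * (((dl b.1.val : ℝ) - ((b.2 : ℕ) + 1)) -
              (dl b.1.val : ℝ) * q / ((q : ℝ) - 1)))) *
          (ρ * (q : ℝ) ^ (-((dl b.1.val : ℝ) - ((b.2 : ℕ) + 1)) +
            (dl b.1.val : ℝ) * q / ((q : ℝ) - 1))) ^ q ^ i := by
          exact mul_le_mul (key i a b) (pow_le_pow_left₀ (norm_nonneg _) (hxb b) _)
            (pow_nonneg (norm_nonneg _) _) (Real.rpow_pos_of_pos hq0 _).le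
      _ = ((q : ℝ) ^ ((dl 0 : ℝ) * q / ((q : ℝ) - 1) +
            (q : ℝ) ^ i * (((dl b.1.val : ℝ) - ((b.2 : ℕ) + 1)) -
              (dl b.1.val : ℝ) * q / ((q : ℝ) - 1))) *
          ((q : ℝ) ^ (-((dl b.1.val : ℝ) - ((b.2 : ℕ) + 1)) +
            (dl b.1.val : ℝ) * q / ((q : ℝ) - 1))) ^ (q ^ i : ℕ)) * ρ ^ q ^ i := by
          rw [mul_pow]
          ring
      _ = _ := by
          rw [← Real.rpow_natCast
            ((q : ℝ) ^ (-((dl b.1.val : ℝ) - ((b.2 : ℕ) + 1)) +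
              (dl b.1.val : ℝ) * q / ((q : ℝ) - 1))) (q ^ i),
            ← Real.rpow_mul hq0.le, ← Real.rpow_add hq0]
          congr 1
          push_cast
          ring
  have htend : ∀ a : (l : Fin r) × Fin (dl l.val),
      Filter.Tendsto (fun i : ℕ => ‖((P i).mulVec fun b => x b ^ q ^ i) a‖)
        Filter.atTop (nhds 0) := by
    intro a
    have h1 : Filter.Tendsto (fun n : ℕ => ρ ^ n) Filter.atTop (nhds 0) :=
      tendsto_pow_atTop_nhds_zero_of_lt_one hρ0 hρ1
    have h2 : Filter.Tendsto (fun i : ℕ => q ^ i) Filter.atTop Filter.atTop :=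
      tendsto_pow_atTop_atTop_of_one_lt (by omega)
    have h3 : Filter.Tendsto
        (fun i : ℕ => (q : ℝ) ^ ((dl 0 : ℝ) * q / ((q : ℝ) - 1)) * ρ ^ q ^ i)
        Filter.atTop (nhds ((q : ℝ) ^ ((dl 0 : ℝ) * q / ((q : ℝ) - 1)) * 0)) :=
      (h1.comp h2).const_mul _
    rw [mul_zero] at h3
    exact squeeze_zero (fun i => norm_nonneg _) (fun i => hbound i a) h3
  refine ⟨htend, fun a => ?_⟩
  have h5 : Filter.Tendsto (fun i : ℕ => ((P i).mulVec fun b => x b ^ q ^ i) a)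
      Filter.cofinite (nhds 0) := by
    rw [Nat.cofinite_eq_atTop]
    exact tendsto_zero_iff_norm_tendsto_zero.mpr (htend a)
  have h6 : Summable (fun i : ℕ => ((P i).mulVec fun b => x b ^ q ^ i) a) :=
    NonarchimedeanAddGroup.summable_of_tendsto_cofinite_zero h5
  exact ⟨_, h6.hasSum⟩
end
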